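/- Let (A,m) be a Noetherian local ring of dimension d ≥ 1 with depth(A) > 0, and let I be a regular ideal of A (an ideal containing a nonzerodivisor). Let M be a finitely generated A-module with ann(M) = 0 such that M_p is a free A_p-module for every prime p ≠ m. Assume G_I(A) is unmixed and equidimensional. If ℓ(I) < d, then r(I^n, M) = Ĩ^n for all n ≥ 1. -/

import Mathlib

open IsLocalRing Filter Polynomial

noncomputable section
set_option synthInstance.maxHeartbeats 1000000
set_option maxHeartbeats 2000000
set_option linter.unusedVariables false

/-- The associated graded ring `G_I(A) = ⊕ₙ Iⁿ/Iⁿ⁺¹` of `A` with respect to `I`,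
realized as the quotient `R(I)/I·R(I)` of the Rees algebra. -/
abbrev assocGraded {A : Type} [CommRing A] (I : Ideal A) :=
  (reesAlgebra I) ⧸ (Ideal.map (algebraMap A (reesAlgebra I)) I)

/-- The fiber cone `R(I)/m·R(I) = ⊕ₙ Iⁿ/m·Iⁿ`. -/
abbrev fiberCone (A : Type) [CommRing A] [IsLocalRing A] (I : Ideal A) :=
  (reesAlgebra I) ⧸ (Ideal.map (algebraMap A (reesAlgebra I)) (maximalIdeal A))

/-- The analytic spread `ℓ(I)`: the Krull dimension of the fiber cone. -/
noncomputable def analyticSpread (A : Type) [CommRing A] [IsLocalRing A] (I : Ideal A) :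
    WithBot ℕ∞ :=
  ringKrullDim (fiberCone A I)

/-- A ring `G` is unmixed and equidimensional (of dimension `d`) if `dim G/P = d`
for every associated prime `P` of `G` (as a module over itself). -/
def UnmixedEquidim (G : Type*) [CommRing G] (d : ℕ) : Prop :=
  ∀ P ∈ associatedPrimes G G, ringKrullDim (G ⧸ P) = (d : WithBot ℕ∞)

/-- `A` is analytically unramified: its `m`-adic completion is reduced. -/
def AnalyticallyUnramified (A : Type) [CommRing A] [IsLocalRing A] : Prop :=
  IsReduced (AdicCompletion (maximalIdeal A) A)

/-- `depth A > 0`: the maximal ideal contains a nonzerodivisor. -/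
def PosDepth (A : Type) [CommRing A] [IsLocalRing A] : Prop :=
  ∃ x ∈ maximalIdeal A, x ∈ nonZeroDivisors A

/-- `M` is free on the punctured spectrum: `M_p` is a free `A_p`-module for every
prime `p ≠ m`. -/
def FreeOnPunctured (A : Type) [CommRing A] [IsLocalRing A]
    (M : Type) [AddCommGroup M] [Module A M] : Prop :=
  ∀ (P : Ideal A) (hP : P.IsPrime), P ≠ maximalIdeal A →
    Module.Free (Localization.AtPrime P) (LocalizedModule P.primeCompl M)

/-- `M` has rank one: `M_p ≅ A_p` for every minimal prime `p` of `A`. -/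
def RankOne (A : Type) [CommRing A] (M : Type) [AddCommGroup M] [Module A M] : Prop :=
  ∀ (P : Ideal A) (hP : P.IsPrime), P ∈ minimalPrimes A →
    Nonempty ((LocalizedModule P.primeCompl M) ≃ₗ[Localization.AtPrime P] Localization.AtPrime P)

/-- `r(I,M)`: the stable value of the ascending chain of ideals `(I^(n+1)M : I^n M)`. -/
noncomputable def rIM {A : Type} [CommRing A] (I : Ideal A) (M : Type)
    [AddCommGroup M] [Module A M] : Ideal A :=
  ⨆ n : ℕ, Submodule.colon (I ^ (n + 1) • (⊤ : Submodule A M)) ((I ^ n • (⊤ : Submodule A M) : Submodule A M) : Set M)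

/-- The Ratliff–Rush closure `J̃` of an ideal `J`: the stable value of the ascending chain
`(J^(n+1) : J^n)`. -/
noncomputable def Ideal.ratliffRush {A : Type} [CommRing A] (J : Ideal A) : Ideal A :=
  ⨆ n : ℕ, Submodule.colon (J ^ (n + 1) : Ideal A) (J ^ n : Ideal A)


section Aux
variable {A : Type} [CommRing A]

lemma aux_exists_mem_mapI (I : Ideal A) (j : ℕ) (v : A) (hv : v ∈ I ^ (j + 1)) :
    ∃ r ∈ Ideal.map (algebraMap A (reesAlgebra I)) I,
      (r : A[X]) = Polynomial.monomial j v := by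
  have hv' : v ∈ I ^ j * I := by rwa [← pow_succ]
  refine Submodule.mul_induction_on hv' ?_ ?_
  · intro x hx y hy
    refine ⟨algebraMap A (reesAlgebra I) y *
      ⟨Polynomial.monomial j x, reesAlgebra.monomial_mem.mpr hx⟩,
      Ideal.mul_mem_right _ _ (Ideal.mem_map_of_mem _ hy), ?_⟩
    have h1 : ((algebraMap A (reesAlgebra I) y : reesAlgebra I) : A[X]) = Polynomial.C y := rfl
    rw [MulMemClass.coe_mul, h1, Polynomial.C_mul_monomial, mul_comm]
  · rintro z w ⟨r1, hr1, hv1⟩ ⟨r2, hr2, hv2⟩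
    exact ⟨r1 + r2, Ideal.add_mem _ hr1 hr2, by
      rw [AddMemClass.coe_add, hv1, hv2, ← map_add]⟩

lemma aux_coeff_mem (I : Ideal A) {r : reesAlgebra I}
    (hr : r ∈ Ideal.map (algebraMap A (reesAlgebra I)) I) (i : ℕ) :
    (r : A[X]).coeff i ∈ I ^ (i + 1) := by
  have hr' : r ∈ Submodule.span (reesAlgebra I) ((algebraMap A (reesAlgebra I)) '' (I : Set A)) := hr
  refine Submodule.span_induction (p := fun (x : reesAlgebra I) _ => ∀ i, ((x : A[X]).coeff i ∈ I ^ (i + 1)))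
    ?_ ?_ ?_ ?_ hr' i
  · rintro x ⟨c, hc, rfl⟩ i
    have h1 : ((algebraMap A (reesAlgebra I) c : reesAlgebra I) : A[X]) = Polynomial.C c := rfl
    rw [h1, Polynomial.coeff_C]
    split_ifs with h
    · subst h; simpa using hc
    · exact zero_mem _
  · intro i; simp
  · intro x y _ _ hx hy i
    rw [AddMemClass.coe_add, Polynomial.coeff_add]
    exact add_mem (hx i) (hy i)
  · intro a x _ hx i
    have : ((a • x : reesAlgebra I) : A[X]) = (a : A[X]) * (x : A[X]) := by
      rw [smul_eq_mul, MulMemClass.coe_mul]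
    rw [this, Polynomial.coeff_mul]
    refine Submodule.sum_mem _ ?_
    rintro ⟨b, c⟩ hbc
    have hbc' : b + c = i := Finset.HasAntidiagonal.mem_antidiagonal.mp hbc
    have h1 : (a : A[X]).coeff b ∈ I ^ b := a.2 b
    have h2 : (x : A[X]).coeff c ∈ I ^ (c + 1) := hx c
    have : I ^ b * I ^ (c + 1) ≤ I ^ (i + 1) := by
      rw [← pow_add]
      exact Ideal.pow_le_pow_right (by omega)
    exact this (Ideal.mul_mem_mul h1 h2)

end Aux

section Sat

lemma aux_sat {A : Type} [CommRing A] [IsLocalRing A] [IsNoetherianRing A]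
    (I : Ideal A) (d : ℕ)
    (hunmix : UnmixedEquidim (assocGraded I) d)
    (hl : analyticSpread A I < (d : WithBot ℕ∞)) :
    ∀ (k t : ℕ) (u : A), u ∈ I ^ k →
      (∀ w ∈ (maximalIdeal A) ^ t, w * u ∈ I ^ (k + 1)) → u ∈ I ^ (k + 1) := by
  intro k t u hu hw
  by_contra hu'
  set R := reesAlgebra I with hR
  set JR : Ideal R := Ideal.map (algebraMap A R) I with hJR
  let r0 : R := ⟨Polynomial.monomial k u, reesAlgebra.monomial_mem.mpr hu⟩
  set g : assocGraded I := Ideal.Quotient.mk JR r0 with hg0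
  have hg : g ≠ 0 := by
    intro h0
    have hmem : r0 ∈ JR := (Ideal.Quotient.eq_zero_iff_mem).mp h0
    have hco := aux_coeff_mem I hmem k
    have : ((r0 : A[X])).coeff k = u := by
      show (Polynomial.monomial k u).coeff k = u
      simp
    rw [this] at hco
    exact hu' hco
  obtain ⟨P, hP, hannP⟩ :=
    exists_le_isAssociatedPrime_of_isNoetherianRing (assocGraded I) g hg
  have hma : Ideal.map (algebraMap A (assocGraded I)) ((maximalIdeal A) ^ (t + 1))
      ≤ (Submodule.span (assocGraded I) {g}).annihilator := by
    rw [Ideal.map_le_iff_le_comap]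
    intro w hwm
    refine Ideal.mem_comap.mpr ((Submodule.mem_annihilator_span_singleton (R := assocGraded I) (M := assocGraded I) g (algebraMap A (assocGraded I) w)).mpr ?_)
    have hwu : w * u ∈ I ^ (k + 1) :=
      hw w (Ideal.pow_le_pow_right (Nat.le_succ t) hwm)
    obtain ⟨r, hrJ, hrval⟩ := aux_exists_mem_mapI I k (w * u) hwu
    have hxe : algebraMap A R w * r0 = r := by
      apply Subtype.ext
      rw [MulMemClass.coe_mul, hrval]
      show Polynomial.C w * Polynomial.monomial k u = _
      rw [Polynomial.C_mul_monomial]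
    have heq : algebraMap A (assocGraded I) w • g
        = Ideal.Quotient.mk JR (algebraMap A R w * r0) := by
      rw [smul_eq_mul, hg0, IsScalarTower.algebraMap_apply A R (assocGraded I),
        Ideal.Quotient.algebraMap_eq, ← map_mul]
    rw [heq, hxe, Ideal.Quotient.eq_zero_iff_mem]
    exact hrJ
  letI : CommRing (reesAlgebra I) := Subalgebra.toCommRing _
  haveI hPp : P.IsPrime := hP.isPrime
  have hmp : Ideal.map (algebraMap A (assocGraded I)) (maximalIdeal A) ≤ P := by
    have h1 : (Ideal.map (algebraMap A (assocGraded I)) (maximalIdeal A)) ^ (t + 1) ≤ P := by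
      rw [← Ideal.map_pow]
      exact le_trans hma (Submodule.bot_colon'.symm.trans_le hannP)
    exact hPp.le_of_pow_le h1
  set mR : Ideal R := Ideal.map (algebraMap A R) (maximalIdeal A) with hmR
  have hcomp : (Ideal.Quotient.mk JR).comp (algebraMap A R)
      = algebraMap A (assocGraded I) := by
    rw [IsScalarTower.algebraMap_eq A R (assocGraded I), Ideal.Quotient.algebraMap_eq]
  have hker : ∀ r ∈ mR, ((Ideal.Quotient.mk P).comp (Ideal.Quotient.mk JR)) r = 0 := by
    intro r hr
    have h2 : Ideal.Quotient.mk JR r ∈ Ideal.map (Ideal.Quotient.mk JR) mR :=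
      Ideal.mem_map_of_mem _ hr
    rw [hmR, Ideal.map_map, hcomp] at h2
    rw [RingHom.comp_apply, Ideal.Quotient.eq_zero_iff_mem]
    exact hmp h2
  let f : fiberCone A I →+* (assocGraded I) ⧸ P :=
    Ideal.Quotient.lift mR ((Ideal.Quotient.mk P).comp (Ideal.Quotient.mk JR)) hker
  have hsurj : Function.Surjective f := by
    intro y
    obtain ⟨gg, rfl⟩ := Ideal.Quotient.mk_surjective y
    obtain ⟨r, rfl⟩ := Ideal.Quotient.mk_surjective gg
    exact ⟨Ideal.Quotient.mk mR r, Ideal.Quotient.lift_mk _ _ _⟩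
  have hdim : ringKrullDim ((assocGraded I) ⧸ P) = (d : WithBot ℕ∞) := hunmix P hP
  have hle : ringKrullDim ((assocGraded I) ⧸ P) ≤ analyticSpread A I :=
    ringKrullDim_le_of_surjective f hsurj
  rw [hdim] at hle
  exact absurd (lt_of_le_of_lt hle hl) (lt_irrefl _)

end Sat

section Loc

lemma aux_loc {A : Type} [CommRing A] [IsLocalRing A]
    (M : Type) [AddCommGroup M] [Module A M] [Module.Finite A M]
    (hann : Module.annihilator A M = ⊥)
    (hfree : FreeOnPunctured A M)
    (N : Ideal A) (c : A)
    (hc : ∀ mm : M, c • mm ∈ N • (⊤ : Submodule A M))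
    (p : Ideal A) (hp : p.IsPrime) (hne : p ≠ maximalIdeal A) :
    ∃ s, s ∉ p ∧ s * c ∈ N := by
  classical
  haveI := hp
  haveI hfp : Module.Free (Localization.AtPrime p) (LocalizedModule p.primeCompl M) :=
    hfree p hp hne
  haveI : Nontrivial (LocalizedModule p.primeCompl M) := by
    by_contra hnt
    rw [not_nontrivial_iff_subsingleton] at hnt
    obtain ⟨T, hT⟩ := Module.Finite.fg_top (R := A) (M := M)
    have hkill : ∀ m : M, ∃ s : p.primeCompl, (s : A) • m = 0 := by
      intro m
      have h0 : (LocalizedModule.mk m (1 : p.primeCompl))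
          = LocalizedModule.mk (0 : M) (1 : p.primeCompl) := Subsingleton.elim _ _
      rw [LocalizedModule.mk_eq] at h0
      obtain ⟨u, hu⟩ := h0
      refine ⟨u, ?_⟩
      simpa [Submonoid.smul_def] using hu
    choose sf hsf using hkill
    set s0 : A := ∏ m ∈ T, (sf m : A) with hs0def
    have hs0S : s0 ∈ p.primeCompl := Submonoid.prod_mem _ (fun m _ => (sf m).2)
    have hgen : ∀ m ∈ T, s0 • m = 0 := by
      intro m hm
      rw [hs0def, ← Finset.mul_prod_erase T _ hm, mul_comm, mul_smul, hsf m, smul_zero]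
    have hall : ∀ m : M, s0 • m = 0 := by
      intro m
      have hmem : m ∈ Submodule.span A (T : Set M) := by rw [hT]; trivial
      refine Submodule.span_induction (p := fun (m : M) _ => s0 • m = 0)
        ?_ ?_ ?_ ?_ hmem
      · intro x hx; exact hgen x hx
      · simp
      · intro x y _ _ h1 h2; rw [smul_add, h1, h2, add_zero]
      · intro a x _ h1; rw [smul_comm, h1, smul_zero]
    have : s0 ∈ Module.annihilator A M := Module.mem_annihilator.mpr hall
    rw [hann, Ideal.mem_bot] at this
    exact hs0S (this ▸ p.zero_mem)
  set Ap := Localization.AtPrime p with hAp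
  let b := Module.Free.chooseBasis Ap (LocalizedModule p.primeCompl M)
  obtain ⟨i0⟩ := b.index_nonempty
  have claim1 : ∀ z ∈ N • (⊤ : Submodule A M),
      LocalizedModule.mk z (1 : p.primeCompl)
        ∈ (N.map (algebraMap A Ap)) • (⊤ : Submodule Ap (LocalizedModule p.primeCompl M)) := by
    intro z hz
    refine Submodule.smul_induction_on hz ?_ ?_
    · intro r hr w _
      have heq : LocalizedModule.mk (r • w) (1 : p.primeCompl)
          = (algebraMap A Ap r) • LocalizedModule.mk w (1 : p.primeCompl) := by
        rw [← Localization.mk_one_eq_algebraMap, LocalizedModule.mk_smul_mk, one_mul]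
      rw [heq]
      exact Submodule.smul_mem_smul (Ideal.mem_map_of_mem _ hr) trivial
    · intro z1 z2 h1 h2
      have heq : LocalizedModule.mk (z1 + z2) (1 : p.primeCompl)
          = LocalizedModule.mk z1 (1 : p.primeCompl)
            + LocalizedModule.mk z2 (1 : p.primeCompl) := by
        rw [LocalizedModule.mk_add_mk]; simp
      rw [heq]
      exact Submodule.add_mem _ h1 h2
  have claim2 : ∀ e : LocalizedModule p.primeCompl M, (algebraMap A Ap c) • e
      ∈ (N.map (algebraMap A Ap)) • (⊤ : Submodule Ap (LocalizedModule p.primeCompl M)) := by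
    intro e
    induction e using LocalizedModule.induction_on with
    | h w s =>
      have e1 : (algebraMap A Ap c) • LocalizedModule.mk w s = LocalizedModule.mk (c • w) s := by
        rw [← Localization.mk_one_eq_algebraMap, LocalizedModule.mk_smul_mk, one_mul]
      have e2 : LocalizedModule.mk (c • w) s
          = Localization.mk 1 s • LocalizedModule.mk (c • w) (1 : p.primeCompl) := by
        rw [LocalizedModule.mk_smul_mk, one_smul, mul_one]
      rw [e1, e2]
      exact Submodule.smul_mem _ _ (claim1 _ (hc w))
  have hcoord : (algebraMap A Ap c) ∈ N.map (algebraMap A Ap) := by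
    have h1 : b.coord i0 ((algebraMap A Ap c) • (b i0))
        ∈ Submodule.map (b.coord i0) ((N.map (algebraMap A Ap)) • ⊤) :=
      Submodule.mem_map_of_mem (claim2 (b i0))
    rw [Submodule.map_smul''] at h1
    have h2 : (N.map (algebraMap A Ap)) • Submodule.map (b.coord i0) ⊤
        ≤ N.map (algebraMap A Ap) := by
      refine Submodule.smul_le.mpr ?_
      intro r hr x _
      rw [smul_eq_mul]
      exact Ideal.mul_mem_right x _ hr
    have h3 : b.coord i0 ((algebraMap A Ap c) • (b i0)) = algebraMap A Ap c := by
      rw [map_smul, Module.Basis.coord_apply, Module.Basis.repr_self, Finsupp.single_eq_same, smul_eq_mul,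
        mul_one]
    rw [h3] at h1
    exact h2 h1
  rw [IsLocalization.mem_map_algebraMap_iff p.primeCompl Ap, ] at hcoord
  obtain ⟨⟨y, s⟩, hys⟩ := hcoord
  rw [← map_mul] at hys
  obtain ⟨u, hu⟩ := (IsLocalization.eq_iff_exists p.primeCompl Ap).mp hys
  have husS : (u : A) * (s : A) ∈ p.primeCompl := Submonoid.mul_mem _ u.2 s.2
  refine ⟨(u : A) * (s : A), husS, ?_⟩
  have harr : (u : A) * (s : A) * c = (u : A) * (c * (s : A)) := by ring
  rw [harr, hu]
  exact Ideal.mul_mem_left _ _ y.2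

end Loc

/-- If `G_I(A)` is unmixed and equidimensional and `ℓ(I) < d`, then `r(Iⁿ,M) = Ĩⁿ`
for all `n ≥ 1`. -/
theorem stmt6 (A : Type) [CommRing A] [IsLocalRing A] [IsNoetherianRing A]
    (d : ℕ) (hd : 1 ≤ d) (hdim : ringKrullDim A = (d : WithBot ℕ∞))
    (hdepth : PosDepth A)
    (I : Ideal A) (hreg : ∃ x ∈ I, x ∈ nonZeroDivisors A)
    (M : Type) [AddCommGroup M] [Module A M] [Module.Finite A M]
    (hann : Module.annihilator A M = ⊥)
    (hfree : FreeOnPunctured A M)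
    (hunmix : UnmixedEquidim (assocGraded I) d)
    (hl : analyticSpread A I < (d : WithBot ℕ∞)) :
    ∀ n : ℕ, 1 ≤ n → rIM (I ^ n) M = (I ^ n).ratliffRush := by
  intro n hn
  set J : Ideal A := I ^ n with hJ
  apply le_antisymm
  · -- hard direction: rIM ≤ ratliffRush
    intro a ha
    have hmono : Monotone (fun k : ℕ =>
        Submodule.colon (J ^ (k + 1) • (⊤ : Submodule A M)) ((J ^ k • (⊤ : Submodule A M) : Submodule A M) : Set M)) := by
      apply monotone_nat_of_le_succ
      intro k b hb
      rw [Submodule.mem_colon] at hb ⊢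
      intro z hz
      rw [show J ^ (k + 1 + 1) = J * J ^ (k + 1) from pow_succ' J (k + 1), mul_smul]
      rw [show J ^ (k + 1) = J * J ^ k from pow_succ' J k, mul_smul] at hz
      refine Submodule.smul_induction_on hz ?_ ?_
      · intro r hr w hw
        rw [smul_comm b r w]
        exact Submodule.smul_mem_smul hr (hb w hw)
      · intro z1 z2 h1 h2
        rw [smul_add]
        exact Submodule.add_mem _ h1 h2
    have ha' : a ∈ ⨆ k : ℕ,
        Submodule.colon (J ^ (k + 1) • (⊤ : Submodule A M)) ((J ^ k • (⊤ : Submodule A M) : Submodule A M) : Set M) := ha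
    obtain ⟨k, hak⟩ := (Submodule.mem_iSup_of_directed _ hmono.directed_le).mp ha'
    have hc : ∀ z ∈ J ^ k • (⊤ : Submodule A M), a • z ∈ J ^ (k + 1) • (⊤ : Submodule A M) :=
      Submodule.mem_colon.mp hak
    have hgoal : a ∈ Submodule.colon (J ^ (k + 1) : Ideal A) (J ^ k : Ideal A) := by
      rw [Submodule.mem_colon]
      intro x hx
      have hcM : ∀ mm : M, (a * x) • mm ∈ J ^ (k + 1) • (⊤ : Submodule A M) := by
        intro mm
        rw [mul_smul]
        exact hc (x • mm) (Submodule.smul_mem_smul hx trivial)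
      set L : Ideal A := Submodule.colon (J ^ (k + 1) : Ideal A) (Ideal.span {a * x}) with hL
      have hLp : ∀ p : Ideal A, p.IsPrime → p ≠ maximalIdeal A → ¬ (L ≤ p) := by
        intro p hp hne hle
        obtain ⟨s, hs, hsc⟩ := aux_loc M hann hfree (J ^ (k + 1)) (a * x) hcM p hp hne
        refine hs (hle ?_)
        rw [hL, Submodule.mem_colon]
        intro y hy
        obtain ⟨r, hr⟩ := Ideal.mem_span_singleton'.mp hy
        rw [smul_eq_mul, ← hr, show s * (r * (a * x)) = r * (s * (a * x)) from by ring]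
        exact Ideal.mul_mem_left _ _ hsc
      have hrad : maximalIdeal A ≤ L.radical := by
        rw [Ideal.radical_eq_sInf]
        refine le_sInf ?_
        rintro q ⟨hLq, hq⟩
        by_cases hqe : q = maximalIdeal A
        · exact le_of_eq hqe.symm
        · exact absurd hLq (hLp q hq hqe)
      obtain ⟨t, ht⟩ := Ideal.exists_radical_pow_le_of_fg L (IsNoetherian.noetherian _)
      have hmt : (maximalIdeal A) ^ t ≤ L := le_trans (Ideal.pow_right_mono hrad t) ht
      have hwc : ∀ w ∈ (maximalIdeal A) ^ t, w * (a * x) ∈ J ^ (k + 1) := by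
        intro w hw
        have := Submodule.mem_colon.mp (hmt hw) (a * x) (Ideal.mem_span_singleton_self _)
        rwa [smul_eq_mul] at this
      have hsat := aux_sat I d hunmix hl
      have hstep : ∀ j : ℕ, j ≤ n → a * x ∈ I ^ (n * k + j) := by
        intro j
        induction j with
        | zero =>
          intro _
          have hx' : x ∈ I ^ (n * k) := by rw [pow_mul]; exact hx
          simpa using Ideal.mul_mem_left _ a hx'
        | succ j ih =>
          intro hj
          have h1 := ih (Nat.le_of_succ_le hj)
          have h2 : n * k + j + 1 = (n * k + j) + 1 := rfl
          refine hsat (n * k + j) t (a * x) h1 ?_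
          intro w hw
          have h3 : J ^ (k + 1) ≤ I ^ (n * k + j + 1) := by
            rw [hJ, ← pow_mul]
            exact Ideal.pow_le_pow_right (by nlinarith)
          exact h3 (hwc w hw)
      have hend := hstep n le_rfl
      rw [smul_eq_mul, hJ, ← pow_mul, show n * (k + 1) = n * k + n from by ring]
      exact hend
    exact le_iSup (fun k : ℕ =>
      Submodule.colon ((I ^ n) ^ (k + 1) : Ideal A) ((I ^ n) ^ k : Ideal A)) k hgoal
  · -- easy direction: ratliffRush ≤ rIM
    refine iSup_le ?_
    intro k a ha
    have hmem : ∀ y ∈ (J ^ k : Ideal A), a * y ∈ (J ^ (k + 1) : Ideal A) := by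
      intro y hy
      have := Submodule.mem_colon.mp ha y hy
      rwa [smul_eq_mul] at this
    have : a ∈ Submodule.colon (J ^ (k + 1) • (⊤ : Submodule A M))
        ((J ^ k • (⊤ : Submodule A M) : Submodule A M) : Set M) := by
      rw [Submodule.mem_colon]
      intro z hz
      refine Submodule.smul_induction_on hz ?_ ?_
      · intro r hr w _
        rw [smul_smul]
        exact Submodule.smul_mem_smul (hmem r hr) trivial
      · intro z1 z2 h1 h2
        rw [smul_add]
        exact Submodule.add_mem _ h1 h2
    exact le_iSup (fun k : ℕ => Submodule.colon ((I ^ n) ^ (k + 1) • (⊤ : Submodule A M))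
      (((I ^ n) ^ k • (⊤ : Submodule A M) : Submodule A M) : Set M)) k this

end
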